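/- Let p be a prime, let V and W be finite-dimensional vector spaces over 𝔽_p = ℤ/pℤ, and let ∘ : V × V → W be a symmetric 𝔽_p-bilinear map that is nontrivial (u ∘ v ≠ 0 for some u, v). Define R(∘) to be the abelian group 𝔽_p ⊕ V ⊕ W with multiplication (s,v,w)·(s',v',w') = (ss', sv' + s'v, sw' + v∘v' + s'w). Then R(∘) is a commutative associative unital ring with identity (1,0,0); it is local; its Jacobson radical is J = 0 ⊕ V ⊕ W; J² = 0 ⊕ 0 ⊕ span{u ∘ v : u, v ∈ V}, which is nonzero; and J³ = 0. In particular J(R) ⊋ J(R)² ⊋ 0. -/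

import Mathlib

/-- The ring `R(∘) = 𝔽_p ⊕ V ⊕ W` associated to a symmetric bilinear map
`∘ : V × V → W`, with multiplication
`(s,v,w)·(s',v',w') = (ss', sv' + s'v, sw' + v∘v' + s'w)`. -/
@[ext]
structure RingOf (p : ℕ) (V W : Type*) [AddCommGroup V] [Module (ZMod p) V]
    [AddCommGroup W] [Module (ZMod p) W]
    (b : V →ₗ[ZMod p] V →ₗ[ZMod p] W) (hb : ∀ u v, b u v = b v u) where
  s : ZMod p
  v : V
  w : W

namespace RingOf

variable {p : ℕ} {V W : Type*} [AddCommGroup V] [Module (ZMod p) V]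
  [AddCommGroup W] [Module (ZMod p) W]
  {b : V →ₗ[ZMod p] V →ₗ[ZMod p] W} {hb : ∀ u v, b u v = b v u}

instance : Add (RingOf p V W b hb) := ⟨fun x y => ⟨x.s + y.s, x.v + y.v, x.w + y.w⟩⟩
instance : Zero (RingOf p V W b hb) := ⟨⟨0, 0, 0⟩⟩
instance : Neg (RingOf p V W b hb) := ⟨fun x => ⟨-x.s, -x.v, -x.w⟩⟩
instance : Mul (RingOf p V W b hb) :=
  ⟨fun x y => ⟨x.s * y.s, x.s • y.v + y.s • x.v, x.s • y.w + b x.v y.v + y.s • x.w⟩⟩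
instance : One (RingOf p V W b hb) := ⟨⟨1, 0, 0⟩⟩

@[simp] lemma add_s (x y : RingOf p V W b hb) : (x + y).s = x.s + y.s := rfl
@[simp] lemma add_v (x y : RingOf p V W b hb) : (x + y).v = x.v + y.v := rfl
@[simp] lemma add_w (x y : RingOf p V W b hb) : (x + y).w = x.w + y.w := rfl
@[simp] lemma zero_s : (0 : RingOf p V W b hb).s = 0 := rfl
@[simp] lemma zero_v : (0 : RingOf p V W b hb).v = 0 := rfl
@[simp] lemma zero_w : (0 : RingOf p V W b hb).w = 0 := rfl
@[simp] lemma neg_s (x : RingOf p V W b hb) : (-x).s = -x.s := rfl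
@[simp] lemma neg_v (x : RingOf p V W b hb) : (-x).v = -x.v := rfl
@[simp] lemma neg_w (x : RingOf p V W b hb) : (-x).w = -x.w := rfl
@[simp] lemma mul_s (x y : RingOf p V W b hb) : (x * y).s = x.s * y.s := rfl
@[simp] lemma mul_v (x y : RingOf p V W b hb) : (x * y).v = x.s • y.v + y.s • x.v := rfl
@[simp] lemma mul_w (x y : RingOf p V W b hb) :
    (x * y).w = x.s • y.w + b x.v y.v + y.s • x.w := rfl
@[simp] lemma one_s : (1 : RingOf p V W b hb).s = 1 := rfl
@[simp] lemma one_v : (1 : RingOf p V W b hb).v = 0 := rfl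
@[simp] lemma one_w : (1 : RingOf p V W b hb).w = 0 := rfl

instance : CommRing (RingOf p V W b hb) where
  add_assoc x y z := by ext <;> simp [add_assoc]
  zero_add x := by ext <;> simp
  add_zero x := by ext <;> simp
  add_comm x y := by ext <;> simp [add_comm]
  neg_add_cancel x := by ext <;> simp
  nsmul := nsmulRec
  zsmul := zsmulRec
  mul_assoc x y z := by
    ext
    · simp [mul_assoc]
    · simp only [mul_v, mul_s, smul_add, smul_smul]
      rw [mul_comm z.s x.s, mul_comm z.s y.s]
      abel
    · simp only [mul_w, mul_v, mul_s, map_add, map_smul, LinearMap.add_apply,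
        LinearMap.smul_apply, smul_add, smul_smul]
      rw [mul_comm z.s x.s, mul_comm z.s y.s]
      abel
  one_mul x := by ext <;> simp
  mul_one x := by ext <;> simp
  left_distrib x y z := by
    ext
    · simp [mul_add]
    · simp only [mul_v, add_v, add_s, smul_add, add_smul]; abel
    · simp only [mul_w, add_w, add_v, add_s, smul_add, add_smul, map_add,
        LinearMap.add_apply]
      abel
  right_distrib x y z := by
    ext
    · simp [add_mul]
    · simp only [mul_v, add_v, add_s, smul_add, add_smul]; abel
    · simp only [mul_w, add_w, add_v, add_s, smul_add, add_smul, map_add,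
        LinearMap.add_apply]
      abel
  zero_mul x := by ext <;> simp
  mul_zero x := by ext <;> simp
  mul_comm x y := by
    ext
    · simp [mul_comm]
    · simp [add_comm]
    · simp only [mul_w, hb x.v y.v]; abel

end RingOf


section Aux

variable {p : ℕ} {V W : Type*} [AddCommGroup V] [Module (ZMod p) V]
  [AddCommGroup W] [Module (ZMod p) W]
  {b : V →ₗ[ZMod p] V →ₗ[ZMod p] W} {hb : ∀ u v, b u v = b v u}

lemma RingOf.isUnit_iff [Fact p.Prime] (x : RingOf p V W b hb) :
    IsUnit x ↔ x.s ≠ 0 := by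
  constructor
  · rintro ⟨u, rfl⟩ h
    have h1 : ((u : RingOf p V W b hb) * ↑u⁻¹).s = (1 : RingOf p V W b hb).s :=
      congrArg RingOf.s u.mul_inv
    rw [RingOf.mul_s, h, zero_mul, RingOf.one_s] at h1
    exact zero_ne_one h1
  · intro h
    refine IsUnit.of_mul_eq_one (a := x) ⟨x.s⁻¹, -(x.s⁻¹ * x.s⁻¹) • x.v,
      (x.s⁻¹ * x.s⁻¹ * x.s⁻¹) • b x.v x.v - (x.s⁻¹ * x.s⁻¹) • x.w⟩ ?_
    have hs : x.s * x.s⁻¹ = 1 := ZMod.mul_inv_of_unit _ (Ne.isUnit h)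
    ext
    · simpa using hs
    · simp only [RingOf.mul_v, RingOf.one_v, smul_smul, smul_neg, neg_smul]
      rw [show x.s * (x.s⁻¹ * x.s⁻¹) = x.s * x.s⁻¹ * x.s⁻¹ by ring, hs]
      simp
    · simp only [RingOf.mul_w, RingOf.one_w, smul_sub, smul_smul, map_smul,
        LinearMap.smul_apply, map_neg, LinearMap.neg_apply, smul_neg]
      rw [show x.s * (x.s⁻¹ * x.s⁻¹ * x.s⁻¹) = x.s * x.s⁻¹ * (x.s⁻¹ * x.s⁻¹) by ring,
        show x.s * (x.s⁻¹ * x.s⁻¹) = x.s * x.s⁻¹ * x.s⁻¹ by ring, hs]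
      module

instance RingOf.instNontrivial [Fact p.Prime] : Nontrivial (RingOf p V W b hb) := by
  refine ⟨0, 1, fun h => ?_⟩
  have := congrArg RingOf.s h
  simp at this

instance RingOf.instLocal [Fact p.Prime] : IsLocalRing (RingOf p V W b hb) := by
  apply IsLocalRing.of_nonunits_add
  intro a c ha hc
  rw [mem_nonunits_iff, RingOf.isUnit_iff, not_not] at ha hc ⊢
  simp [ha, hc]

end Aux

/-- The ring `R(∘)` is a commutative associative unital ring with identity `(1,0,0)`
(witnessed by the `CommRing` instance constructed above); it is local, its Jacobson
radical is `J = 0 ⊕ V ⊕ W`, `J² = 0 ⊕ 0 ⊕ span{u ∘ v}` is nonzero, and `J³ = 0`;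
in particular `J ⊋ J² ⊋ 0`. -/
theorem statement17 (p : ℕ) (hp : p.Prime) {V W : Type*}
    [AddCommGroup V] [Module (ZMod p) V] [Module.Finite (ZMod p) V]
    [AddCommGroup W] [Module (ZMod p) W] [Module.Finite (ZMod p) W]
    (b : V →ₗ[ZMod p] V →ₗ[ZMod p] W) (hb : ∀ u v, b u v = b v u)
    (hnt : ∃ u v, b u v ≠ 0) :
    (1 : RingOf p V W b hb) = ⟨1, 0, 0⟩ ∧
    (∀ x y : RingOf p V W b hb, x * y = y * x) ∧
    (∀ x y z : RingOf p V W b hb, x * y * z = x * (y * z)) ∧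
    IsLocalRing (RingOf p V W b hb) ∧
    (∀ x : RingOf p V W b hb, x ∈ (⊥ : Ideal (RingOf p V W b hb)).jacobson ↔ x.s = 0) ∧
    (∀ x : RingOf p V W b hb,
      x ∈ (⊥ : Ideal (RingOf p V W b hb)).jacobson ^ 2 ↔
        x.s = 0 ∧ x.v = 0 ∧ x.w ∈ Submodule.span (ZMod p) {w : W | ∃ u v, b u v = w}) ∧
    (⊥ : Ideal (RingOf p V W b hb)).jacobson ^ 2 ≠ ⊥ ∧
    (⊥ : Ideal (RingOf p V W b hb)).jacobson ^ 3 = ⊥ ∧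
    (⊥ : Ideal (RingOf p V W b hb)).jacobson ^ 2 < (⊥ : Ideal (RingOf p V W b hb)).jacobson := by
  have := Fact.mk hp
  haveI : IsLocalRing (RingOf p V W b hb) := RingOf.instLocal
  obtain ⟨u0, v0, hnt⟩ := hnt
  have hmem : ∀ x : RingOf p V W b hb,
      x ∈ (⊥ : Ideal (RingOf p V W b hb)).jacobson ↔ x.s = 0 := by
    intro x
    rw [IsLocalRing.jacobson_eq_maximalIdeal ⊥ bot_ne_top,
      IsLocalRing.mem_maximalIdeal, mem_nonunits_iff, RingOf.isUnit_iff, not_not]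
  set M := Submodule.span (ZMod p) {w : W | ∃ u v, b u v = w} with hM
  set T : Ideal (RingOf p V W b hb) :=
    { carrier := {x : RingOf p V W b hb | x.s = 0 ∧ x.v = 0 ∧ x.w ∈ M}
      add_mem' := by
        rintro x y ⟨hx1, hx2, hx3⟩ ⟨hy1, hy2, hy3⟩
        refine ⟨?_, ?_, ?_⟩
        · show (x + y).s = 0; simp [hx1, hy1]
        · show (x + y).v = 0; simp [hx2, hy2]
        · show (x + y).w ∈ M; rw [RingOf.add_w]; exact M.add_mem hx3 hy3
      zero_mem' := ⟨rfl, rfl, M.zero_mem⟩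
      smul_mem' := by
        rintro r x ⟨hx1, hx2, hx3⟩
        refine ⟨?_, ?_, ?_⟩
        · show (r * x).s = 0; simp [hx1]
        · show (r * x).v = 0; simp [hx1, hx2]
        · show (r * x).w ∈ M
          simp only [RingOf.mul_w, hx1, hx2, map_zero, zero_smul, add_zero,
            LinearMap.zero_apply]
          exact M.smul_mem _ hx3 } with hT
  have hsq : (⊥ : Ideal (RingOf p V W b hb)).jacobson ^ 2 = T := by
    apply le_antisymm
    · rw [pow_two]
      apply Ideal.mul_le.mpr
      intro x hx y hy
      rw [hmem] at hx hy
      refine ⟨?_, ?_, ?_⟩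
      · show (x * y).s = 0; simp [hx, hy]
      · show (x * y).v = 0; simp [hx, hy]
      · show (x * y).w ∈ M
        simp only [RingOf.mul_w, hx, hy, zero_smul, zero_add, add_zero]
        exact Submodule.subset_span ⟨_, _, rfl⟩
    · rintro x ⟨hx1, hx2, hx3⟩
      have key : ∀ w : W, w ∈ M →
          (⟨0, 0, w⟩ : RingOf p V W b hb) ∈ (⊥ : Ideal (RingOf p V W b hb)).jacobson ^ 2 := by
        intro w hw
        induction hw using Submodule.span_induction with
        | mem w hw =>
          obtain ⟨u, v, rfl⟩ := hw
          have e : (⟨0, 0, b u v⟩ : RingOf p V W b hb) = (⟨0, u, 0⟩ : RingOf p V W b hb) * ⟨0, v, 0⟩ := by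
            ext <;> simp
          rw [e, pow_two]
          exact Ideal.mul_mem_mul ((hmem _).mpr rfl) ((hmem _).mpr rfl)
        | zero =>
          have e : (⟨0, 0, (0 : W)⟩ : RingOf p V W b hb) = 0 := by ext <;> simp
          rw [e]; exact zero_mem _
        | add w1 w2 _ _ h1 h2 =>
          have e : (⟨0, 0, w1 + w2⟩ : RingOf p V W b hb) =
              (⟨0, 0, w1⟩ : RingOf p V W b hb) + ⟨0, 0, w2⟩ := by ext <;> simp
          rw [e]; exact add_mem h1 h2
        | smul c w _ h =>
          have e : (⟨0, 0, c • w⟩ : RingOf p V W b hb) =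
              (⟨c, 0, 0⟩ : RingOf p V W b hb) * ⟨0, 0, w⟩ := by ext <;> simp
          rw [e]; exact Ideal.mul_mem_left _ _ h
      have e : x = (⟨0, 0, x.w⟩ : RingOf p V W b hb) := by ext <;> simp [hx1, hx2]
      rw [e]; exact key _ hx3
  refine ⟨rfl, mul_comm, mul_assoc, inferInstance, hmem, fun x => by rw [hsq]; rfl, ?_, ?_, ?_⟩
  · rw [hsq]
    intro h
    have hmemT : (⟨0, 0, b u0 v0⟩ : RingOf p V W b hb) ∈ T :=
      ⟨rfl, rfl, Submodule.subset_span ⟨_, _, rfl⟩⟩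
    rw [h] at hmemT
    have := congrArg RingOf.w (Ideal.mem_bot.mp hmemT)
    exact hnt this
  · apply le_antisymm _ bot_le
    rw [pow_succ, hsq]
    apply Ideal.mul_le.mpr
    rintro x ⟨hx1, hx2, hx3⟩ y hy
    rw [hmem] at hy
    rw [Ideal.mem_bot]
    ext <;> simp [hx1, hx2, hy]
  · rw [hsq]
    constructor
    · rintro x ⟨hx1, hx2, hx3⟩
      exact (hmem x).mpr hx1
    · intro h
      have hu0 : u0 ≠ 0 := fun h0 => hnt (by simp [h0])
      have hmemT : (⟨0, u0, 0⟩ : RingOf p V W b hb) ∈ T := h ((hmem _).mpr rfl)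
      exact hu0 hmemT.2.1
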